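/- For nonzero integers a and b, the group Π(a, −1, −1, 1) is isomorphic to Π(b, −1, −1, 1) if and only if |a| = |b|. -/

import Mathlib

/-- The relator set of the presentation
`⟨s₁, s₂, s₃ ∣ s₁s₂s₁⁻¹ = s₃^a s₂^ε, s₁s₃s₁⁻¹ = s₃^{ε₁}, s₂s₃s₂⁻¹ = s₃^{ε₂}⟩`. -/
def PiRels (a ε ε₁ ε₂ : ℤ) : Set (FreeGroup (Fin 3)) :=
  { FreeGroup.of 0 * FreeGroup.of 1 * (FreeGroup.of 0)⁻¹ * FreeGroup.of 1 ^ (-ε) *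
      FreeGroup.of 2 ^ (-a),
    FreeGroup.of 0 * FreeGroup.of 2 * (FreeGroup.of 0)⁻¹ * FreeGroup.of 2 ^ (-ε₁),
    FreeGroup.of 1 * FreeGroup.of 2 * (FreeGroup.of 1)⁻¹ * FreeGroup.of 2 ^ (-ε₂) }

/-- The group `Π(a, ε, ε₁, ε₂)` with presentation
`⟨s₁, s₂, s₃ ∣ s₁s₂s₁⁻¹ = s₃^a s₂^ε, s₁s₃s₁⁻¹ = s₃^{ε₁}, s₂s₃s₂⁻¹ = s₃^{ε₂}⟩`. -/
abbrev PiGroup (a ε ε₁ ε₂ : ℤ) : Type := PresentedGroup (PiRels a ε ε₁ ε₂)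
namespace PiAux

/-! ### Generic presented-group hom machinery -/

section HomEquiv
variable {α : Type*} {rels : Set (FreeGroup α)} {G : Type*} [Group G]

theorem mk_rel_eq_one {r : FreeGroup α} (hr : r ∈ rels) : (PresentedGroup.mk rels) r = 1 :=
  (QuotientGroup.eq_one_iff r).mpr (Subgroup.subset_normalClosure hr)

def presentedHomEquiv :
    (PresentedGroup rels →* G) ≃ {f : α → G // ∀ r ∈ rels, FreeGroup.lift f r = 1} where
  toFun φ := ⟨fun x => φ (PresentedGroup.of x), fun r hr => by
    have h1 : FreeGroup.lift (fun x => φ (PresentedGroup.of x)) r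
        = (φ.comp (PresentedGroup.mk rels)) r :=
      (FreeGroup.lift_unique (φ.comp (PresentedGroup.mk rels)) (fun x => rfl)).symm
    rw [h1, MonoidHom.comp_apply, mk_rel_eq_one hr, map_one]⟩
  invFun f := PresentedGroup.toGroup f.2
  left_inv φ := by ext x; simp [PresentedGroup.toGroup.of]
  right_inv f := by ext x; simp [PresentedGroup.toGroup.of]

end HomEquiv

def homPrecompEquiv {H H' G : Type*} [Group H] [Group H'] [Group G] (e : H ≃* H') :
    (H →* G) ≃ (H' →* G) where
  toFun φ := φ.comp e.symm.toMonoidHom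
  invFun ψ := ψ.comp e.toMonoidHom
  left_inv φ := by ext x; simp
  right_inv ψ := by ext x; simp

/-! ### Solution sets -/

abbrev Sol (a : ℤ) (G : Type*) [Group G] :=
  {p : G × G × G // p.1 * p.2.1 * p.1⁻¹ * p.2.1 * p.2.2 ^ (-a) = 1 ∧
    p.1 * p.2.2 * p.1⁻¹ * p.2.2 = 1 ∧ p.2.1 * p.2.2 * p.2.1⁻¹ * p.2.2⁻¹ = 1}

lemma forall_mem_piRels_iff {G : Type*} [Group G] (a : ℤ) (f : Fin 3 → G) :
    (∀ r ∈ PiRels a (-1) (-1) 1, FreeGroup.lift f r = 1) ↔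
      (f 0 * f 1 * (f 0)⁻¹ * f 1 * (f 2) ^ (-a) = 1 ∧
       f 0 * f 2 * (f 0)⁻¹ * f 2 = 1 ∧ f 1 * f 2 * (f 1)⁻¹ * (f 2)⁻¹ = 1) := by
  simp [PiRels, Set.mem_insert_iff, map_mul, map_zpow, map_inv, forall_eq_or_imp]

def solEquiv (a : ℤ) (G : Type*) [Group G] :
    (PiGroup a (-1) (-1) 1 →* G) ≃ Sol a G :=
  presentedHomEquiv.trans
  { toFun := fun f => ⟨(f.1 0, f.1 1, f.1 2), (forall_mem_piRels_iff a f.1).mp f.2⟩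
    invFun := fun p => ⟨![p.1.1, p.1.2.1, p.1.2.2],
      (forall_mem_piRels_iff a _).mpr (by simpa using p.2)⟩
    left_inv := fun f => by
      apply Subtype.ext; funext i; fin_cases i <;> rfl
    right_inv := fun p => by apply Subtype.ext; rfl }

lemma card_sol_eq {a b : ℤ} (e : PiGroup a (-1) (-1) 1 ≃* PiGroup b (-1) (-1) 1)
    (G : Type*) [Group G] : Nat.card (Sol a G) = Nat.card (Sol b G) :=
  Nat.card_congr ((solEquiv a G).symm.trans ((homPrecompEquiv e).trans (solEquiv b G)))


open DihedralGroup

/-! ### small group-theory lemmas -/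

variable {G : Type*} [Group G]

lemma zpow_eq_zpow_of_even_sub {z : G} (hz : z * z = 1) {a b : ℤ} (h : Even (a - b)) :
    z ^ a = z ^ b := by
  obtain ⟨t, ht⟩ := h
  have ha : a = b + 2 * t := by linarith
  rw [ha, zpow_add, zpow_mul, show (z : G) ^ (2:ℤ) = z * z from by
    rw [show (2:ℤ) = (2:ℕ) from rfl, zpow_natCast, pow_two], hz, one_zpow, mul_one]

lemma zpow_eq_one_of_even {z : G} (hz : z * z = 1) {a : ℤ} (h : Even a) : z ^ a = 1 := by
  have := zpow_eq_zpow_of_even_sub hz (a := a) (b := 0) (by simpa using h)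
  simpa using this

lemma zpow_eq_self_of_odd {z : G} (hz : z * z = 1) {a : ℤ} (h : Odd a) : z ^ a = z := by
  have := zpow_eq_zpow_of_even_sub hz (a := a) (b := 1) (by simpa [Int.even_sub, Int.odd_iff] using h.sub_odd odd_one)
  simpa using this

/-! ### Dihedral lemmas -/

theorem inv_r {n : ℕ} (k : ZMod n) : (r k)⁻¹ = r (-k) := rfl
theorem inv_sr {n : ℕ} (k : ZMod n) : (sr k)⁻¹ = sr k := rfl

theorem r_pow {n : ℕ} (k : ZMod n) (m : ℕ) : (r k) ^ m = r (m • k) := by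
  induction m with
  | zero => simp [one_def, -r_zero]
  | succ m ih => rw [pow_succ, ih, r_mul_r, succ_nsmul]

theorem r_zpow {n : ℕ} (k : ZMod n) (m : ℤ) : (r k) ^ m = r ((m : ZMod n) * k) := by
  cases m with
  | ofNat m => rw [Int.ofNat_eq_coe, zpow_natCast, r_pow, nsmul_eq_mul]; push_cast; ring_nf
  | negSucc m => rw [zpow_negSucc, r_pow, inv_r, nsmul_eq_mul]; push_cast; ring_nf


/-! ### Counting in DihedralGroup 2 (parity invariant) -/

open DihedralGroup

lemma d2_key : ∀ x y : DihedralGroup 2, x * y * x⁻¹ * y = 1 := by decide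
lemma d2_comm : ∀ x y : DihedralGroup 2, x * y * x⁻¹ * y⁻¹ = 1 := by decide
lemma d2_sq : ∀ z : DihedralGroup 2, z * z = 1 := by decide

lemma card_sol_two (a : ℤ) :
    Nat.card (Sol a (DihedralGroup 2)) = if Even a then 64 else 16 := by
  have e : Sol a (DihedralGroup 2) ≃
      (DihedralGroup 2 × DihedralGroup 2 × {z : DihedralGroup 2 // z ^ (-a) = 1}) :=
  { toFun := fun s => ⟨s.1.1, s.1.2.1, ⟨s.1.2.2, by
      have h := s.2.1
      rwa [d2_key s.1.1 s.1.2.1, one_mul] at h⟩⟩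
    invFun := fun t => ⟨(t.1, t.2.1, t.2.2.1),
      ⟨by rw [d2_key t.1 t.2.1, one_mul]; exact t.2.2.2, d2_key t.1 t.2.2.1,
        d2_comm t.2.1 t.2.2.1⟩⟩
    left_inv := fun s => by apply Subtype.ext; rfl
    right_inv := fun t => rfl }
  rw [Nat.card_congr e, Nat.card_prod, Nat.card_prod, DihedralGroup.nat_card]
  by_cases h : Even a
  · have hall : ∀ z : DihedralGroup 2, z ^ (-a) = 1 :=
      fun z => zpow_eq_one_of_even (d2_sq z) h.neg
    rw [Nat.card_congr (Equiv.subtypeUnivEquiv hall), DihedralGroup.nat_card]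
    simp [h]
  · have hodd : Odd a := Int.not_even_iff_odd.mp h
    have h1 : ∀ z : DihedralGroup 2, z ^ (-a) = 1 ↔ z = 1 := by
      intro z
      rw [zpow_eq_self_of_odd (d2_sq z) hodd.neg]
    have : Nat.card {z : DihedralGroup 2 // z ^ (-a) = 1} = 1 := by
      rw [Nat.card_eq_one_iff_unique]
      constructor
      · constructor
        intro x y
        apply Subtype.ext
        rw [(h1 x.1).mp x.2, (h1 y.1).mp y.2]
      · exact ⟨⟨1, (h1 1).mpr rfl⟩⟩
    rw [this]
    simp [h]


/-! ### Counting in DihedralGroup n -/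

open DihedralGroup

lemma card_split (T : Type*) [Finite T] (P : T → Prop) :
    Nat.card T = Nat.card {x // P x} + Nat.card {x // ¬ P x} := by
  classical
  rw [← Nat.card_sum, Nat.card_congr (Equiv.sumCompl P)]

lemma card_pred_split {T : Type*} [Finite T] (P Q : T → Prop) :
    Nat.card {x // P x} =
      Nat.card {x // P x ∧ Q x} + Nat.card {x // P x ∧ ¬ Q x} := by
  classical
  rw [card_split {x // P x} (fun x => Q x.1)]
  congr 1
  · exact Nat.card_congr (Equiv.subtypeSubtypeEquivSubtypeInter P Q)
  · exact Nat.card_congr (Equiv.subtypeSubtypeEquivSubtypeInter P (fun x => ¬ Q x))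

variable {n : ℕ} [NeZero n]

omit [NeZero n] in
lemma neg_cast_mul_eq_zero {a : ℤ} {k : ZMod n} (h : (a : ZMod n) * k = 0) :
    ((-a : ℤ) : ZMod n) * k = 0 := by
  push_cast
  rw [neg_mul, h, neg_zero]

def bigMap (a : ℤ) (t : {k : ZMod n // (a : ZMod n) * k = 0 ∧ 2 * k ≠ 0} × ZMod n × ZMod n) :
    {s : Sol a (DihedralGroup n) // s.1.2.2 * s.1.2.2 ≠ 1} :=
  ⟨⟨(sr t.2.1, r t.2.2, r t.1.1),
    by
      refine ⟨?_, ?_, ?_⟩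
      · rw [r_zpow, neg_cast_mul_eq_zero t.1.2.1]
        simp [sr_mul_r, sr_mul_sr, r_mul_r, inv_sr, one_def, -r_zero]
      · simp [sr_mul_r, sr_mul_sr, r_mul_r, inv_sr, one_def, -r_zero]
      · simp [r_mul_r, inv_r, one_def, -r_zero]⟩,
    by
      have h2 := t.1.2.2
      simp only [r_mul_r, one_def, ne_eq, r.injEq]
      rw [two_mul] at h2
      exact h2⟩

lemma bigMap_bijective (a : ℤ) : Function.Bijective (bigMap (n := n) a) := by
  constructor
  · rintro ⟨⟨k, hk⟩, i, j⟩ ⟨⟨k', hk'⟩, i', j'⟩ h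
    simp only [bigMap, Subtype.mk.injEq, Prod.mk.injEq, sr.injEq, r.injEq] at h
    simp only [Prod.mk.injEq, Subtype.mk.injEq]
    tauto
  · rintro ⟨⟨⟨x, y, z⟩, h1, h2, h3⟩, hz⟩
    simp only at hz h1 h2 h3
    -- z is a rotation r k with 2k ≠ 0
    obtain ⟨k, rfl⟩ : ∃ k, z = r k := by
      cases z with
      | r k => exact ⟨k, rfl⟩
      | sr c => exact absurd (sr_mul_self c) hz
    have hk2 : k + k ≠ 0 := by
      intro h
      apply hz
      rw [r_mul_r, h, one_def]
    -- x is a reflection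
    obtain ⟨i, rfl⟩ : ∃ i, x = sr i := by
      cases x with
      | sr i => exact ⟨i, rfl⟩
      | r i =>
        exfalso
        rw [r_mul_r, inv_r, r_mul_r, r_mul_r, one_def, r.injEq] at h2
        apply hk2
        linear_combination h2
    -- y is a rotation
    obtain ⟨j, rfl⟩ : ∃ j, y = r j := by
      cases y with
      | r j => exact ⟨j, rfl⟩
      | sr j =>
        exfalso
        rw [inv_sr, inv_r, sr_mul_r, sr_mul_sr, r_mul_r, one_def, r.injEq] at h3
        apply hk2
        linear_combination -h3
    have hak : (a : ZMod n) * k = 0 := by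
      rw [r_zpow, inv_sr, sr_mul_r, sr_mul_sr, r_mul_r, r_mul_r, one_def, r.injEq] at h1
      push_cast at h1
      linear_combination -h1
    refine ⟨⟨⟨k, hak, by rwa [two_mul]⟩, i, j⟩, ?_⟩
    apply Subtype.ext
    apply Subtype.ext
    rfl

lemma card_sol_dihedral (a : ℤ) :
    Nat.card (Sol a (DihedralGroup n)) =
      Nat.card {s : Sol a (DihedralGroup n) // s.1.2.2 * s.1.2.2 = 1} +
        Nat.card {k : ZMod n // (a : ZMod n) * k = 0 ∧ 2 * k ≠ 0} * (n * n) := by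
  rw [card_split (Sol a (DihedralGroup n)) (fun s => s.1.2.2 * s.1.2.2 = 1)]
  congr 1
  rw [← Nat.card_eq_of_bijective _ (bigMap_bijective (n := n) a), Nat.card_prod, Nat.card_prod,
    Nat.card_zmod]


/-! ### Comparing the counts for `a` and `b` -/

open DihedralGroup

def eSetEquiv {G : Type*} [Group G] {a b : ℤ} (h : Even (a - b)) :
    {s : Sol a G // s.1.2.2 * s.1.2.2 = 1} ≃ {s : Sol b G // s.1.2.2 * s.1.2.2 = 1} where
  toFun s := ⟨⟨s.1.1, by
      have hc := s.1.2
      rwa [zpow_eq_zpow_of_even_sub s.2 (show Even ((-a) - (-b)) from by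
        rw [show -a - -b = -(a - b) by ring]; exact h.neg)] at hc⟩, s.2⟩
  invFun s := ⟨⟨s.1.1, by
      have hc := s.1.2
      rwa [zpow_eq_zpow_of_even_sub s.2 (show Even ((-b) - (-a)) from by
        rw [show -b - -a = a - b by ring]; exact h)] at hc⟩, s.2⟩
  left_inv s := by apply Subtype.ext; apply Subtype.ext; rfl
  right_inv s := by apply Subtype.ext; apply Subtype.ext; rfl

lemma cast_mul_eq_of_even_sub {n : ℕ} {a b : ℤ} (h : Even (a - b)) {k : ZMod n}
    (hk : 2 * k = 0) : (a : ZMod n) * k = (b : ZMod n) * k := by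
  obtain ⟨t, ht⟩ := h
  have ha : a = b + 2 * t := by linarith
  rw [ha]
  push_cast
  linear_combination (t : ZMod n) * hk

lemma key_count (a b : ℤ) (hpar : Even (a - b)) (n : ℕ) [NeZero n]
    (hcard : Nat.card (Sol a (DihedralGroup n)) = Nat.card (Sol b (DihedralGroup n))) :
    Nat.card {k : ZMod n // (a : ZMod n) * k = 0} =
      Nat.card {k : ZMod n // (b : ZMod n) * k = 0} := by
  rw [card_sol_dihedral a, card_sol_dihedral b, Nat.card_congr (eSetEquiv hpar)] at hcard
  have hnn : 0 < n * n := Nat.mul_pos (Nat.pos_of_ne_zero (NeZero.ne n)) (Nat.pos_of_ne_zero (NeZero.ne n))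
  have hm : Nat.card {k : ZMod n // (a : ZMod n) * k = 0 ∧ 2 * k ≠ 0} =
      Nat.card {k : ZMod n // (b : ZMod n) * k = 0 ∧ 2 * k ≠ 0} :=
    Nat.eq_of_mul_eq_mul_right hnn (Nat.add_left_cancel hcard)
  have e1 : Nat.card {k : ZMod n // (a : ZMod n) * k = 0 ∧ 2 * k = 0} =
      Nat.card {k : ZMod n // (b : ZMod n) * k = 0 ∧ 2 * k = 0} :=
    Nat.card_congr (Equiv.subtypeEquivRight (fun k => by
      constructor
      · rintro ⟨h1, h2⟩; exact ⟨by rw [← cast_mul_eq_of_even_sub hpar h2]; exact h1, h2⟩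
      · rintro ⟨h1, h2⟩; exact ⟨by rw [cast_mul_eq_of_even_sub hpar h2]; exact h1, h2⟩))
  have e2 := card_pred_split (fun k : ZMod n => (a : ZMod n) * k = 0) (fun k => 2 * k = 0)
  have e3 := card_pred_split (fun k : ZMod n => (b : ZMod n) * k = 0) (fun k => 2 * k = 0)
  simp only [ne_eq] at hm e1 e2 e3 ⊢
  omega

lemma dvd_of_counts (a b : ℤ) (hb : b ≠ 0)
    (h : Nat.card {k : ZMod b.natAbs // (a : ZMod b.natAbs) * k = 0} =
      Nat.card {k : ZMod b.natAbs // (b : ZMod b.natAbs) * k = 0}) :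
    b.natAbs ∣ a.natAbs := by
  classical
  haveI : NeZero b.natAbs := ⟨Int.natAbs_ne_zero.mpr hb⟩
  have hb0 : (b : ZMod b.natAbs) = 0 := by
    rw [ZMod.intCast_zmod_eq_zero_iff_dvd]
    exact Int.natAbs_dvd.mpr dvd_rfl
  have hr : Nat.card {k : ZMod b.natAbs // (b : ZMod b.natAbs) * k = 0} =
      Nat.card (ZMod b.natAbs) :=
    Nat.card_congr (Equiv.subtypeUnivEquiv (fun k => by rw [hb0, zero_mul]))
  rw [hr, Nat.card_zmod] at h
  have hall : ∀ k : ZMod b.natAbs, (a : ZMod b.natAbs) * k = 0 := by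
    by_contra hc
    push_neg at hc
    obtain ⟨k, hk⟩ := hc
    have hlt : Nat.card {k : ZMod b.natAbs // (a : ZMod b.natAbs) * k = 0} <
        Nat.card (ZMod b.natAbs) := by
      rw [Nat.card_eq_fintype_card, Nat.card_eq_fintype_card]
      exact Fintype.card_subtype_lt (x := k) hk
    rw [Nat.card_zmod] at hlt
    omega
  have ha0 : (a : ZMod b.natAbs) = 0 := by
    have := hall 1
    rwa [mul_one] at this
  have hdvd : ((b.natAbs : ℤ)) ∣ a := (ZMod.intCast_zmod_eq_zero_iff_dvd a b.natAbs).mp ha0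
  have := Int.natAbs_dvd_natAbs.mpr hdvd
  rwa [Int.natAbs_natCast] at this


/-! ### The isomorphism `Π(a) ≅ Π(-a)` -/


lemma rels_hold (d : ℤ) :
    ((PresentedGroup.of 0 : PiGroup d (-1) (-1) 1) * .of 1 * (.of 0)⁻¹ * .of 1 *
        (.of 2) ^ (-d) = 1 ∧
      (PresentedGroup.of 0 : PiGroup d (-1) (-1) 1) * .of 2 * (.of 0)⁻¹ * .of 2 = 1 ∧
      (PresentedGroup.of 1 : PiGroup d (-1) (-1) 1) * .of 2 * (.of 1)⁻¹ * (.of 2)⁻¹ = 1) := by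
  rw [← forall_mem_piRels_iff d (fun x => (PresentedGroup.of x : PiGroup d (-1) (-1) 1))]
  intro r hr
  have h1 : FreeGroup.lift (fun x => (PresentedGroup.of x : PiGroup d (-1) (-1) 1)) r
      = PresentedGroup.mk _ r :=
    (FreeGroup.lift_unique (PresentedGroup.mk _) (fun x => rfl)).symm
  rw [h1, mk_rel_eq_one hr]

def negMap (c d : ℤ) (h : c = -d) : PiGroup c (-1) (-1) 1 →* PiGroup d (-1) (-1) 1 :=
  PresentedGroup.toGroup
    (f := ![PresentedGroup.of 0, PresentedGroup.of 1, (PresentedGroup.of 2)⁻¹]) <| by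
    rw [forall_mem_piRels_iff]
    obtain ⟨R1, R2, R3⟩ := rels_hold d
    have hx0 : (![PresentedGroup.of 0, PresentedGroup.of 1, (PresentedGroup.of 2)⁻¹] :
        Fin 3 → PiGroup d (-1) (-1) 1) 0 = PresentedGroup.of 0 := rfl
    have hx1 : (![PresentedGroup.of 0, PresentedGroup.of 1, (PresentedGroup.of 2)⁻¹] :
        Fin 3 → PiGroup d (-1) (-1) 1) 1 = PresentedGroup.of 1 := rfl
    have hx2 : (![PresentedGroup.of 0, PresentedGroup.of 1, (PresentedGroup.of 2)⁻¹] :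
        Fin 3 → PiGroup d (-1) (-1) 1) 2 = (PresentedGroup.of 2)⁻¹ := rfl
    rw [hx0, hx1, hx2]
    refine ⟨?_, ?_, ?_⟩
    · rw [h]
      have hz : ((PresentedGroup.of 2 : PiGroup d (-1) (-1) 1)⁻¹) ^ (-(-d)) =
          (PresentedGroup.of 2 : PiGroup d (-1) (-1) 1) ^ (-d) := by
        rw [neg_neg, inv_zpow, ← zpow_neg]
      rw [hz]
      exact R1
    · have hc : (PresentedGroup.of 0 : PiGroup d (-1) (-1) 1) * .of 2 * (.of 0)⁻¹ =
          (PresentedGroup.of 2)⁻¹ := mul_eq_one_iff_eq_inv.mp R2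
      have h2 : (PresentedGroup.of 0 : PiGroup d (-1) (-1) 1) * (.of 2)⁻¹ * (.of 0)⁻¹ =
          ((PresentedGroup.of 0 : PiGroup d (-1) (-1) 1) * .of 2 * (.of 0)⁻¹)⁻¹ := by group
      rw [h2, hc]
      group
    · have hc : (PresentedGroup.of 1 : PiGroup d (-1) (-1) 1) * .of 2 * (.of 1)⁻¹ =
          ((PresentedGroup.of 2 : PiGroup d (-1) (-1) 1)⁻¹)⁻¹ := mul_eq_one_iff_eq_inv.mp R3
      have h2 : (PresentedGroup.of 1 : PiGroup d (-1) (-1) 1) * (.of 2)⁻¹ * (.of 1)⁻¹ =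
          ((PresentedGroup.of 1 : PiGroup d (-1) (-1) 1) * .of 2 * (.of 1)⁻¹)⁻¹ := by group
      rw [h2, hc]
      group

def negEquiv (c d : ℤ) (h : c = -d) (h' : d = -c) :
    PiGroup c (-1) (-1) 1 ≃* PiGroup d (-1) (-1) 1 :=
  MonoidHom.toMulEquiv (negMap c d h) (negMap d c h')
    (by
      ext x
      fin_cases x <;>
        simp [negMap, PresentedGroup.toGroup.of, map_inv])
    (by
      ext x
      fin_cases x <;>
        simp [negMap, PresentedGroup.toGroup.of, map_inv])


end PiAux

set_option maxHeartbeats 1000000 in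
/-- For nonzero integers `a`, `b`: `Π(a, −1, −1, 1) ≅ Π(b, −1, −1, 1)` iff `|a| = |b|`. -/
theorem PiGroup_infranil_iso_iff (a b : ℤ) (ha : a ≠ 0) (hb : b ≠ 0) :
    Nonempty (PiGroup a (-1) (-1) 1 ≃* PiGroup b (-1) (-1) 1) ↔ |a| = |b| := by
  constructor
  · rintro ⟨e⟩
    have hC : ∀ (G : Type) [Group G], Nat.card (PiAux.Sol a G) = Nat.card (PiAux.Sol b G) :=
      fun G _ => PiAux.card_sol_eq e G
    have h2 := hC (DihedralGroup 2)
    rw [PiAux.card_sol_two, PiAux.card_sol_two] at h2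
    have hpar : Even (a - b) := by
      rw [Int.even_sub]
      by_cases hA : Even a <;> by_cases hB : Even b <;> simp [hA, hB] at h2 ⊢
    haveI : NeZero a.natAbs := ⟨Int.natAbs_ne_zero.mpr ha⟩
    haveI : NeZero b.natAbs := ⟨Int.natAbs_ne_zero.mpr hb⟩
    have d1 : b.natAbs ∣ a.natAbs :=
      PiAux.dvd_of_counts a b hb (PiAux.key_count a b hpar b.natAbs (hC _))
    have hpar' : Even (b - a) := by
      have h3 := hpar.neg
      rwa [neg_sub] at h3
    have d2 : a.natAbs ∣ b.natAbs :=
      PiAux.dvd_of_counts b a ha (PiAux.key_count b a hpar' a.natAbs (hC _).symm)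
    have hab : a.natAbs = b.natAbs := Nat.dvd_antisymm d2 d1
    rw [Int.abs_eq_natAbs, Int.abs_eq_natAbs, hab]
  · intro h
    rcases abs_eq_abs.mp h with h1 | h1
    · subst h1
      exact ⟨MulEquiv.refl _⟩
    · exact ⟨PiAux.negEquiv a b h1 (by omega)⟩
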